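/- Let ε > 0 be a real number and define ψ(y) = ((1+ε)(3+2ε)y² + εy + 1)·(1−y)^ε for 0 < y < 1. Then for every y ∈ (0,1), ψ(y) ≤ (2(7ε+6)/(2ε+3))·(2ε/(2ε+3))^ε, with equality when y = 3/(3+2ε); that is, sup_{0<y<1} ψ(y) = ψ(3/(3+2ε)) = (2(7ε+6)/(2ε+3))·(2ε/(2ε+3))^ε. -/

import Mathlib

/-- `sup_{0<y<1} ψ(y) = ψ(3/(3+2ε)) = (2(7ε+6)/(2ε+3)) (2ε/(2ε+3))^ε` for
`ψ(y) = ((1+ε)(3+2ε)y² + εy + 1)(1−y)^ε`. -/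
theorem stmt_13 (ε : ℝ) (hε : 0 < ε)
    (ψ : ℝ → ℝ)
    (hψ : ∀ y : ℝ, 0 < y → y < 1 →
      ψ y = ((1 + ε) * (3 + 2 * ε) * y ^ 2 + ε * y + 1) * (1 - y) ^ ε) :
    (∀ y : ℝ, 0 < y → y < 1 →
        ψ y ≤ 2 * (7 * ε + 6) / (2 * ε + 3) * (2 * ε / (2 * ε + 3)) ^ ε) ∧
      ψ (3 / (3 + 2 * ε))
        = 2 * (7 * ε + 6) / (2 * ε + 3) * (2 * ε / (2 * ε + 3)) ^ ε := by
  have h3 : (0:ℝ) < 3 + 2 * ε := by linarith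
  set y₀ : ℝ := 3 / (3 + 2 * ε) with hy₀def
  have hy₀pos : 0 < y₀ := by positivity
  have hy₀lt : y₀ < 1 := by rw [hy₀def, div_lt_one h3]; linarith
  set g : ℝ → ℝ := fun y => ((1 + ε) * (3 + 2 * ε) * y ^ 2 + ε * y + 1) * (1 - y) ^ ε
    with hg
  -- derivative
  have hderiv : ∀ y : ℝ, y < 1 → HasDerivAt g
      ((1 - y) ^ (ε - 1) * ((1 + ε) * (2 + ε) * y * (3 - (3 + 2 * ε) * y))) y := by
    intro y hy
    have h1y : 0 < 1 - y := by linarith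
    have hP : HasDerivAt (fun y : ℝ => (1 + ε) * (3 + 2 * ε) * y ^ 2 + ε * y + 1)
        ((1 + ε) * (3 + 2 * ε) * (2 * y) + ε) y := by
      have h1 := (hasDerivAt_pow 2 y).const_mul ((1 + ε) * (3 + 2 * ε))
      have h2 := (hasDerivAt_id y).const_mul ε
      have := (h1.add h2).add_const 1
      refine this.congr_deriv ?_
      ring
    have hr : HasDerivAt (fun y : ℝ => (1 - y) ^ ε) (ε * (1 - y) ^ (ε - 1) * (-1)) y := by
      have hbase : HasDerivAt (fun y : ℝ => 1 - y) (-1) y := by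
        simpa using (hasDerivAt_id y).const_sub (1:ℝ)
      exact (Real.hasDerivAt_rpow_const (Or.inl h1y.ne')).comp y hbase
    have hsplit : (1 - y) ^ (ε - 1) * (1 - y) = (1 - y) ^ ε := by
      rw [← Real.rpow_add_one h1y.ne' (ε - 1), sub_add_cancel]
    have := hP.mul hr
    refine this.congr_deriv ?_
    rw [← hsplit]
    ring
  have hcont : Continuous g := by
    apply Continuous.mul
    · continuity
    · refine continuous_iff_continuousAt.2 fun y => ?_
      exact (Real.continuousAt_rpow_const _ _ (Or.inr hε.le)).comp
        ((continuous_const.sub continuous_id).continuousAt)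
  have hy₀mul : (3 + 2 * ε) * y₀ = 3 := by
    rw [hy₀def]; field_simp
  have hmono : StrictMonoOn g (Set.Icc 0 y₀) := by
    apply strictMonoOn_of_deriv_pos (convex_Icc 0 y₀) hcont.continuousOn
    intro x hx
    rw [interior_Icc] at hx
    have hx1 : x < 1 := lt_trans hx.2 hy₀lt
    rw [(hderiv x hx1).deriv]
    have hbr : 0 < 3 - (3 + 2 * ε) * x := by
      have : (3 + 2 * ε) * x < (3 + 2 * ε) * y₀ := by
        exact mul_lt_mul_of_pos_left hx.2 h3
      rw [hy₀mul] at this; linarith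
    have h12 : (0:ℝ) < (1 + ε) * (2 + ε) := by nlinarith
    exact mul_pos (Real.rpow_pos_of_pos (by linarith) _)
      (mul_pos (mul_pos h12 hx.1) hbr)
  have hanti : StrictAntiOn g (Set.Icc y₀ 1) := by
    apply strictAntiOn_of_deriv_neg (convex_Icc y₀ 1) hcont.continuousOn
    intro x hx
    rw [interior_Icc] at hx
    rw [(hderiv x hx.2).deriv]
    have hbr : 3 - (3 + 2 * ε) * x < 0 := by
      have : (3 + 2 * ε) * y₀ < (3 + 2 * ε) * x := mul_lt_mul_of_pos_left hx.1 h3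
      rw [hy₀mul] at this; linarith
    have h12 : (0:ℝ) < (1 + ε) * (2 + ε) := by nlinarith
    have hxpos : 0 < x := lt_trans hy₀pos hx.1
    exact mul_neg_of_pos_of_neg (Real.rpow_pos_of_pos (by linarith [hx.2]) _)
      (mul_neg_of_pos_of_neg (mul_pos h12 hxpos) hbr)
  -- value at y₀
  have h1y₀ : 1 - y₀ = 2 * ε / (2 * ε + 3) := by
    rw [hy₀def]; field_simp; ring
  have hP₀ : (1 + ε) * (3 + 2 * ε) * y₀ ^ 2 + ε * y₀ + 1
      = 2 * (7 * ε + 6) / (2 * ε + 3) := by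
    rw [hy₀def]; field_simp; ring
  have hval : g y₀ = 2 * (7 * ε + 6) / (2 * ε + 3) * (2 * ε / (2 * ε + 3)) ^ ε := by
    rw [hg]; simp only; rw [hP₀, h1y₀]
  constructor
  · intro y hy0 hy1
    rw [hψ y hy0 hy1, ← hval]
    show g y ≤ g y₀
    rcases le_total y y₀ with hle | hle
    · exact hmono.monotoneOn ⟨hy0.le, hle⟩ ⟨hy₀pos.le, le_refl _⟩ hle
    · exact hanti.antitoneOn ⟨le_refl _, hy₀lt.le⟩ ⟨hle, hy1.le⟩ hle
  · rw [hψ y₀ hy₀pos hy₀lt, ← hval]
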